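/- Let k ≥ 2 and s ≥ 2 be integers and let F ⊆ binom([n],k) be a k-graph with ν(F) ≤ s. Suppose U ⊆ [n] satisfies |U| = ks + k − 2 and every k-element subset of U belongs to F. Let i, j ∈ [n] ∖ U with i ≠ j, and let F_i, F_j ∈ F be edges with i ∈ F_i, j ∈ F_j, F_i ∖ {i} ⊆ U and F_j ∖ {j} ⊆ U. Then F_i ∩ F_j ≠ ∅; that is, the families N_F(i) and N_F(j) are cross-intersecting. -/

import Mathlib

/-- The `(x,y)`-shift of a single edge `A` with respect to the family `F`. -/
def shiftEdge (x y : ℕ) (F : Finset (Finset ℕ)) (A : Finset ℕ) : Finset ℕ :=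
  if y ∈ A ∧ x ∉ A ∧ insert x (A.erase y) ∉ F then insert x (A.erase y) else A

/-- The `(x,y)`-shift of a family `F`. -/
def shiftFam (x y : ℕ) (F : Finset (Finset ℕ)) : Finset (Finset ℕ) :=
  F.image (shiftEdge x y F)

/-- The matching number: the largest size of a pairwise-disjoint subfamily. -/
noncomputable def matchingNumber (F : Finset (Finset ℕ)) : ℕ :=
  sSup {m | ∃ M ⊆ F, M.card = m ∧ (M : Set (Finset ℕ)).PairwiseDisjoint id}

/-- `F` is non-trivial on `[n]`: no vertex of `[n] = {1,…,n}` is isolated. -/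
def NonTrivial (n : ℕ) (F : Finset (Finset ℕ)) : Prop :=
  ∀ v ∈ Finset.Icc 1 n, ∃ A ∈ F, v ∈ A

/-- `F` is shifted on `Y`: all `(x,y)`-shifts with `x < y` in `Y` fix `F`. -/
def ShiftedOn (Y : Finset ℕ) (F : Finset (Finset ℕ)) : Prop :=
  ∀ x ∈ Y, ∀ y ∈ Y, x < y → shiftFam x y F = F

/-- The clique number of the `k`-graph `F` on `[n]`. -/
noncomputable def cliqueNum (n k : ℕ) (F : Finset (Finset ℕ)) : ℕ :=
  sSup {m | ∃ U ⊆ Finset.Icc 1 n, U.card = m ∧ Finset.powersetCard k U ⊆ F}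

/-- The vertex-cover number of the `k`-graph `F` on `[n]`. -/
noncomputable def coverNum (n : ℕ) (F : Finset (Finset ℕ)) : ℕ :=
  sInf {t | ∃ T ⊆ Finset.Icc 1 n, T.card = t ∧ ∀ A ∈ F, (A ∩ T).Nonempty}

/-- The link `N_F(x)`. -/
def nbr (F : Finset (Finset ℕ)) (x : ℕ) : Finset (Finset ℕ) :=
  (F.filter fun A => x ∈ A).image fun A => A.erase x

/-- The link `N_F(x,y)`. -/
def nbr2 (F : Finset (Finset ℕ)) (x y : ℕ) : Finset (Finset ℕ) :=
  (F.filter fun A => x ∈ A ∧ y ∈ A).image fun A => (A.erase x).erase y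

/-- The link `N_F(x, ȳ)`. -/
def nbrBar (F : Finset (Finset ℕ)) (x y : ℕ) : Finset (Finset ℕ) :=
  (F.filter fun A => x ∈ A ∧ y ∉ A).image fun A => A.erase x

/-- The extremal family `E₀(n,k,s)`. -/
def E0 (n k s : ℕ) : Finset (Finset ℕ) :=
  Finset.powersetCard k (Finset.Icc 1 (k * s + k - 2)) ∪
  ((Finset.powersetCard k (Finset.Icc 1 n)).filter
    (fun A => A \ Finset.Icc 1 (k * s + k - 2) = {k * s + k - 1} ∧
      (A ∩ Finset.Icc 1 (k - 1)).Nonempty)) ∪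
  ((Finset.Icc (k * s + k) n).image (fun x => insert x (Finset.Icc 1 (k - 1))))

open Classical in
/-- The extremal family `E₁(n,k,s)`. -/
noncomputable def E1 (n k s : ℕ) : Finset (Finset ℕ) :=
  Finset.powersetCard k (Finset.Icc 1 (k * s + k - 2)) ∪
  ((Finset.powersetCard k (Finset.Icc 1 n)).filter
    (fun A => 1 ∈ A ∧ ∃ x ∈ Finset.Icc (k * s + k - 1) n,
      A \ Finset.Icc 1 (k * s + k - 2) = {x}))

/-- `F` is `s`-saturated on `[n]`. -/
def Saturated (n k s : ℕ) (F : Finset (Finset ℕ)) : Prop :=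
  matchingNumber F ≤ s ∧
  ∀ G ∈ Finset.powersetCard k (Finset.Icc 1 n), G ∉ F →
    matchingNumber (insert G F) = s + 1


/-- Partition a set of size `k*m` into `m` pairwise disjoint `k`-sets. -/
lemma exists_partition_kblocks (k : ℕ) (hk : 1 ≤ k) :
    ∀ m (V : Finset ℕ), V.card = k * m →
      ∃ M : Finset (Finset ℕ), M.card = m ∧ (∀ A ∈ M, A ⊆ V ∧ A.card = k) ∧
        (M : Set (Finset ℕ)).PairwiseDisjoint id := by
  intro m
  induction m with
  | zero => exact fun V _ => ⟨∅, by simp, by simp, by simp⟩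
  | succ m ih =>
    intro V hV
    have hkV : k ≤ V.card := by
      rw [hV, Nat.mul_succ]; omega
    obtain ⟨A, hAV, hAcard⟩ := Finset.exists_subset_card_eq hkV
    have hVA : (V \ A).card = k * m := by
      rw [Finset.card_sdiff_of_subset hAV, hV, Nat.mul_succ]; omega
    obtain ⟨M, hMcard, hMsub, hMdisj⟩ := ih (V \ A) hVA
    have hAnotM : A ∉ M := by
      intro hA
      obtain ⟨x, hx⟩ := Finset.card_pos.mp (by omega : 0 < A.card)
      have := (hMsub A hA).1 hx
      exact (Finset.mem_sdiff.mp this).2 hx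
    refine ⟨insert A M, ?_, ?_, ?_⟩
    · rw [Finset.card_insert_of_notMem hAnotM, hMcard]
    · intro B hB
      rcases Finset.mem_insert.mp hB with rfl | hB
      · exact ⟨hAV, hAcard⟩
      · exact ⟨(hMsub B hB).1.trans (Finset.sdiff_subset), (hMsub B hB).2⟩
    · rw [Finset.coe_insert]
      refine hMdisj.insert ?_
      intro B hB _
      have hBsub := (hMsub B hB).1
      simp only [id]
      rw [Finset.disjoint_left]
      intro x hxA hxB
      exact (Finset.mem_sdiff.mp (hBsub hxB)).2 hxA

/-- links of outside vertices are cross-intersecting. -/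
theorem stmt14 (n k s : ℕ) (hk : 2 ≤ k) (hs : 2 ≤ s)
    (F : Finset (Finset ℕ)) (hF : F ⊆ Finset.powersetCard k (Finset.Icc 1 n))
    (hnu : matchingNumber F ≤ s)
    (U : Finset ℕ) (hU : U ⊆ Finset.Icc 1 n) (hUcard : U.card = k * s + k - 2)
    (hclique : Finset.powersetCard k U ⊆ F)
    (i j : ℕ) (hi : i ∈ Finset.Icc 1 n) (hj : j ∈ Finset.Icc 1 n)
    (hiU : i ∉ U) (hjU : j ∉ U) (hij : i ≠ j)
    (Fi Fj : Finset ℕ) (hFi : Fi ∈ F) (hFj : Fj ∈ F)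
    (hiFi : i ∈ Fi) (hjFj : j ∈ Fj)
    (hFiU : Fi.erase i ⊆ U) (hFjU : Fj.erase j ⊆ U) :
    (Fi ∩ Fj).Nonempty := by
  by_contra hne
  have hempty : Fi ∩ Fj = ∅ := Finset.not_nonempty_iff_eq_empty.mp hne
  have hdisjFij : Disjoint Fi Fj := Finset.disjoint_iff_inter_eq_empty.mpr hempty
  -- cards of Fi, Fj
  obtain ⟨hFisub, hFicard⟩ := Finset.mem_powersetCard.mp (hF hFi)
  obtain ⟨hFjsub, hFjcard⟩ := Finset.mem_powersetCard.mp (hF hFj)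
  -- V := (U \ Fi) \ Fj has card k*(s-1)
  set V := (U \ Fi) \ Fj with hVdef
  have hUFi : U ∩ Fi = Fi.erase i := by
    apply Finset.Subset.antisymm
    · intro x hx
      rcases Finset.mem_inter.mp hx with ⟨hxU, hxFi⟩
      exact Finset.mem_erase.mpr ⟨fun h => hiU (h ▸ hxU), hxFi⟩
    · intro x hx
      exact Finset.mem_inter.mpr ⟨hFiU hx, Finset.mem_of_mem_erase hx⟩
  have hUFj : (U \ Fi) ∩ Fj = Fj.erase j := by
    apply Finset.Subset.antisymm
    · intro x hx
      rcases Finset.mem_inter.mp hx with ⟨hxU, hxFj⟩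
      exact Finset.mem_erase.mpr ⟨fun h => hjU (h ▸ (Finset.mem_sdiff.mp hxU).1), hxFj⟩
    · intro x hx
      have hxFj := Finset.mem_of_mem_erase hx
      have hxU : x ∈ U := hFjU hx
      have hxFi : x ∉ Fi := fun h => hne ⟨x, Finset.mem_inter.mpr ⟨h, hxFj⟩⟩
      exact Finset.mem_inter.mpr ⟨Finset.mem_sdiff.mpr ⟨hxU, hxFi⟩, hxFj⟩
  have hc1 : (U \ Fi).card + (Fi.erase i).card = U.card := by
    rw [← hUFi]; exact Finset.card_sdiff_add_card_inter U Fi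
  have hc2 : V.card + (Fj.erase j).card = (U \ Fi).card := by
    rw [← hUFj]; exact Finset.card_sdiff_add_card_inter (U \ Fi) Fj
  have hei : (Fi.erase i).card = k - 1 := by rw [Finset.card_erase_of_mem hiFi, hFicard]
  have hej : (Fj.erase j).card = k - 1 := by rw [Finset.card_erase_of_mem hjFj, hFjcard]
  obtain ⟨t, rfl⟩ : ∃ t, s = t + 2 := ⟨s - 2, by omega⟩
  have hmul1 : k * (t + 2) = k * t + 2 * k := by ring
  have hmul2 : k * (t + 1) = k * t + k := by ring
  have hVcard : V.card = k * (t + 1) := by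
    rw [hmul2]
    rw [hUcard, hmul1] at hc1
    omega
  obtain ⟨M, hMcard, hMsub, hMdisj⟩ := exists_partition_kblocks k (by omega) (t + 1) V hVcard
  -- the big matching
  set M' := insert Fi (insert Fj M) with hM'def
  have hiFj : i ∉ Fj := fun h => hne ⟨i, Finset.mem_inter.mpr ⟨hiFi, h⟩⟩
  have hFinotM : Fi ∉ M := fun h =>
    (Finset.mem_sdiff.mp (Finset.mem_sdiff.mp ((hMsub Fi h).1 hiFi)).1).2 hiFi
  have hFjnotM : Fj ∉ M := fun h =>
    (Finset.mem_sdiff.mp ((hMsub Fj h).1 hjFj)).2 hjFj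
  have hFiFj : Fi ≠ Fj := fun h => hiFj (h ▸ hiFi)
  have hFinot : Fi ∉ insert Fj M := by
    simp only [Finset.mem_insert]
    push_neg
    exact ⟨hFiFj, hFinotM⟩
  have hM'card : M'.card = t + 3 := by
    rw [hM'def, Finset.card_insert_of_notMem hFinot,
      Finset.card_insert_of_notMem hFjnotM, hMcard]
  have hM'F : M' ⊆ F := by
    intro A hA
    rcases Finset.mem_insert.mp hA with rfl | hA
    · exact hFi
    rcases Finset.mem_insert.mp hA with rfl | hA
    · exact hFj
    · apply hclique
      exact Finset.mem_powersetCard.mpr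
        ⟨(hMsub A hA).1.trans ((Finset.sdiff_subset).trans Finset.sdiff_subset),
          (hMsub A hA).2⟩
  have hdisjFiM : ∀ B ∈ M, Disjoint Fi B := by
    intro B hB
    rw [Finset.disjoint_left]
    intro x hxFi hxB
    exact (Finset.mem_sdiff.mp (Finset.mem_sdiff.mp ((hMsub B hB).1 hxB)).1).2 hxFi
  have hdisjFjM : ∀ B ∈ M, Disjoint Fj B := by
    intro B hB
    rw [Finset.disjoint_left]
    intro x hxFj hxB
    exact (Finset.mem_sdiff.mp ((hMsub B hB).1 hxB)).2 hxFj
  have hM'disj : (M' : Set (Finset ℕ)).PairwiseDisjoint id := by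
    rw [hM'def, Finset.coe_insert, Finset.coe_insert]
    refine (hMdisj.insert ?_).insert ?_
    · intro B hB _
      simp only [id]
      exact hdisjFjM B hB
    · intro B hB _
      simp only [id]
      rcases hB with rfl | hB
      · exact hdisjFij
      · exact hdisjFiM B hB
  -- conclude: matching number ≥ t + 3 > s = t + 2
  have hbdd : BddAbove {m | ∃ M ⊆ F, M.card = m ∧ (M : Set (Finset ℕ)).PairwiseDisjoint id} := by
    refine ⟨F.card, ?_⟩
    rintro m ⟨N, hN, rfl, -⟩
    exact Finset.card_le_card hN
  have hle : t + 3 ≤ matchingNumber F :=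
    le_csSup hbdd ⟨M', hM'F, hM'card, hM'disj⟩
  omega
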